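/- Let g : ℝ^d → ℝ be measurable with |g(x)| ≤ M for all x ∈ ℝ^d, and let w₁, w₂ ∈ ℝ. Then |E[Y·g(X)] − w₁·E[g(X⁺)] − w₂·E[g(X⁻)]| ≤ M·Err(w₁, w₂). Consequently, for every measurable h : ℝ^d → ℝ with |φ'(h(x))| ≤ M for all x, and every λ ∈ ℝ, |R(h) − R_linear(h; λ, w₁, w₂)| ≤ M·Err(w₁, w₂). -/

import Mathlib

open MeasureTheory ProbabilityTheory

private lemma int_of_bdd {α : Type*} [MeasurableSpace α] {ν : Measure α} [IsFiniteMeasure ν]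
    {f : α → ℝ} (hf : Measurable f) {C : ℝ} (h : ∀ x, |f x| ≤ C) : Integrable f ν :=
  ⟨hf.aestronglyMeasurable, HasFiniteIntegral.of_bounded (C := C)
    (Filter.Eventually.of_forall (fun x => by simpa [Real.norm_eq_abs] using h x))⟩

/-- Key lemma: expectations of `g (X⁺)`, `g (X⁻)` in terms of the CDF. -/
private lemma keyA {Ω : Type*} [MeasurableSpace Ω] {μ : Measure Ω} [IsProbabilityMeasure μ]
    {d : ℕ} {X X' : Ω → (Fin d → ℝ)} {Y Y' : Ω → ℝ}
    (hX : Measurable X) (hY : Measurable Y) (hX' : Measurable X') (hY' : Measurable Y')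
    (hindep : IndepFun (fun ω => (X ω, Y ω)) (fun ω => (X' ω, Y' ω)) μ)
    (hident : μ.map (fun ω => (X ω, Y ω)) = μ.map (fun ω => (X' ω, Y' ω)))
    (hatomless : ∀ t : ℝ, μ {ω | Y ω = t} = 0)
    (g : (Fin d → ℝ) → ℝ) (hg : Measurable g) {M : ℝ} (hgb : ∀ x, |g x| ≤ M) :
    (∫ ω, g (if Y' ω ≤ Y ω then X ω else X' ω) ∂μ
       = 2 * ∫ ω, (μ {ω' | Y ω' ≤ Y ω}).toReal * g (X ω) ∂μ) ∧
    (∫ ω, g (if Y' ω ≤ Y ω then X' ω else X ω) ∂μ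
       = 2 * ∫ ω, (1 - (μ {ω' | Y ω' ≤ Y ω}).toReal) * g (X ω) ∂μ) := by
  classical
  have hM0 : 0 ≤ M := le_trans (abs_nonneg _) (hgb 0)
  have hXY : Measurable fun ω => (X ω, Y ω) := hX.prodMk hY
  have hXY' : Measurable fun ω => (X' ω, Y' ω) := hX'.prodMk hY'
  set ν : Measure ((Fin d → ℝ) × ℝ) := μ.map (fun ω => (X ω, Y ω)) with hνdef
  have hνprob : IsProbabilityMeasure ν := Measure.isProbabilityMeasure_map hXY.aemeasurable
  have joint : μ.map (fun ω => ((X ω, Y ω), (X' ω, Y' ω))) = ν.prod ν := by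
    rw [(indepFun_iff_map_prod_eq_prod_map_map hXY.aemeasurable hXY'.aemeasurable).mp hindep,
      ← hident]
  -- atomless consequences
  have hlt : ∀ t, μ {ω | Y ω < t} = μ {ω | Y ω ≤ t} := by
    intro t
    refine le_antisymm (measure_mono fun ω h => show Y ω ≤ t from le_of_lt h) ?_
    calc μ {ω | Y ω ≤ t} ≤ μ ({ω | Y ω < t} ∪ {ω | Y ω = t}) :=
          measure_mono (fun ω h => show Y ω < t ∨ Y ω = t from (lt_or_eq_of_le h).imp id id)
      _ ≤ μ {ω | Y ω < t} + μ {ω | Y ω = t} := measure_union_le _ _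
      _ = μ {ω | Y ω < t} := by rw [hatomless t, add_zero]
  have tois : ∀ s : Set Ω, MeasurableSet s → (μ sᶜ).toReal = 1 - (μ s).toReal := by
    intro s hs
    rw [measure_compl hs (measure_ne_top μ s), measure_univ,
      ENNReal.toReal_sub_of_le prob_le_one ENNReal.one_ne_top, ENNReal.toReal_one]
  -- values of ν on half-space slices
  have hνle : ∀ t : ℝ, ν {q : (Fin d → ℝ) × ℝ | q.2 ≤ t} = μ {ω | Y ω ≤ t} := by
    intro t
    have hms : MeasurableSet {q : (Fin d → ℝ) × ℝ | q.2 ≤ t} :=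
      measurable_snd measurableSet_Iic
    rw [hνdef, Measure.map_apply hXY hms]
    rfl
  have hνlt : ∀ t : ℝ, ν {q : (Fin d → ℝ) × ℝ | q.2 < t} = μ {ω | Y ω ≤ t} := by
    intro t
    have hms : MeasurableSet {q : (Fin d → ℝ) × ℝ | q.2 < t} :=
      measurable_snd measurableSet_Iio
    rw [hνdef, Measure.map_apply hXY hms]
    exact hlt t
  have hνge : ∀ t : ℝ, (ν {q : (Fin d → ℝ) × ℝ | t ≤ q.2}).toReal
      = 1 - (μ {ω | Y ω ≤ t}).toReal := by
    intro t
    have hms : MeasurableSet {q : (Fin d → ℝ) × ℝ | t ≤ q.2} :=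
      measurable_snd measurableSet_Ici
    rw [hνdef, Measure.map_apply hXY hms]
    have hset : ((fun ω => (X ω, Y ω)) ⁻¹' {q : (Fin d → ℝ) × ℝ | t ≤ q.2})
        = {ω | Y ω < t}ᶜ := by
      ext ω; simp [not_lt]
    rw [hset, tois _ (measurableSet_lt hY measurable_const), hlt]
  have hνgt : ∀ t : ℝ, (ν {q : (Fin d → ℝ) × ℝ | t < q.2}).toReal
      = 1 - (μ {ω | Y ω ≤ t}).toReal := by
    intro t
    have hms : MeasurableSet {q : (Fin d → ℝ) × ℝ | t < q.2} :=
      measurable_snd measurableSet_Ioi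
    rw [hνdef, Measure.map_apply hXY hms]
    have hset : ((fun ω => (X ω, Y ω)) ⁻¹' {q : (Fin d → ℝ) × ℝ | t < q.2})
        = {ω | Y ω ≤ t}ᶜ := by
      ext ω; simp [not_le]
    rw [hset, tois _ (measurableSet_le hY measurable_const)]
  -- transfer to the product measure
  have transfer : ∀ f : ((Fin d → ℝ) × ℝ) × ((Fin d → ℝ) × ℝ) → ℝ, Measurable f →
      ∫ ω, f ((X ω, Y ω), (X' ω, Y' ω)) ∂μ = ∫ p, f p ∂(ν.prod ν) := by
    intro f hf
    rw [← joint]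
    exact (integral_map (hXY.prodMk hXY').aemeasurable hf.aestronglyMeasurable).symm
  have swap_eq : ∀ f : ((Fin d → ℝ) × ℝ) × ((Fin d → ℝ) × ℝ) → ℝ, Measurable f →
      ∫ p, f p ∂(ν.prod ν) = ∫ p, f (Prod.swap p) ∂(ν.prod ν) := by
    intro f hf
    conv_lhs => rw [← Measure.prod_swap]
    exact integral_map measurable_swap.aemeasurable hf.aestronglyMeasurable
  -- Fubini computation for "first coordinate value" integrands
  have fub : ∀ s : Set (ℝ × ℝ), MeasurableSet s →
      Integrable (fun p : ((Fin d → ℝ) × ℝ) × ((Fin d → ℝ) × ℝ) =>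
          if (p.1.2, p.2.2) ∈ s then g p.1.1 else 0) (ν.prod ν) ∧
      ∫ p : ((Fin d → ℝ) × ℝ) × ((Fin d → ℝ) × ℝ),
          (if (p.1.2, p.2.2) ∈ s then g p.1.1 else 0) ∂(ν.prod ν)
        = ∫ ω, (ν {q : (Fin d → ℝ) × ℝ | (Y ω, q.2) ∈ s}).toReal * g (X ω) ∂μ := by
    intro s hs
    have hcond : Measurable fun p : ((Fin d → ℝ) × ℝ) × ((Fin d → ℝ) × ℝ) =>
        (p.1.2, p.2.2) :=
      (measurable_snd.comp measurable_fst).prodMk (measurable_snd.comp measurable_snd)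
    have hmeas : Measurable fun p : ((Fin d → ℝ) × ℝ) × ((Fin d → ℝ) × ℝ) =>
        if (p.1.2, p.2.2) ∈ s then g p.1.1 else 0 :=
      Measurable.ite (hcond hs) (hg.comp (measurable_fst.comp measurable_fst))
        measurable_const
    have hint : Integrable (fun p : ((Fin d → ℝ) × ℝ) × ((Fin d → ℝ) × ℝ) =>
        if (p.1.2, p.2.2) ∈ s then g p.1.1 else 0) (ν.prod ν) :=
      int_of_bdd hmeas (C := M)
        (fun p => by by_cases hp : (p.1.2, p.2.2) ∈ s <;> simp [hp, hgb, hM0])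
    refine ⟨hint, ?_⟩
    rw [integral_prod _ hint]
    have inner : ∀ (y : ℝ) (x : Fin d → ℝ),
        ∫ q : (Fin d → ℝ) × ℝ, (if (y, q.2) ∈ s then g x else 0) ∂ν
          = (ν {q : (Fin d → ℝ) × ℝ | (y, q.2) ∈ s}).toReal * g x := by
      intro y x
      have hms : MeasurableSet {q : (Fin d → ℝ) × ℝ | (y, q.2) ∈ s} :=
        hs.preimage (measurable_const.prodMk measurable_snd)
      have hind : (fun q : (Fin d → ℝ) × ℝ => if (y, q.2) ∈ s then g x else 0)
          = Set.indicator {q : (Fin d → ℝ) × ℝ | (y, q.2) ∈ s} (fun _ => g x) := by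
        funext q
        simp [Set.indicator_apply, Set.mem_setOf_eq]
      rw [hind, integral_indicator_const _ hms, smul_eq_mul]; rfl
    have houter : ∫ p : (Fin d → ℝ) × ℝ,
        (∫ q : (Fin d → ℝ) × ℝ, (if (p.2, q.2) ∈ s then g p.1 else 0) ∂ν) ∂ν
        = ∫ p : (Fin d → ℝ) × ℝ,
            (ν {q : (Fin d → ℝ) × ℝ | (p.2, q.2) ∈ s}).toReal * g p.1 ∂ν :=
      integral_congr_ae (Filter.Eventually.of_forall fun p => inner p.2 p.1)
    rw [houter]
    have hνs : Measurable fun t : ℝ => ν {q : (Fin d → ℝ) × ℝ | (t, q.2) ∈ s} := by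
      have hs' : MeasurableSet {r : ℝ × ((Fin d → ℝ) × ℝ) | (r.1, r.2.2) ∈ s} :=
        hs.preimage (measurable_fst.prodMk (measurable_snd.comp measurable_snd))
      exact measurable_measure_prodMk_left hs'
    have hintmeas : Measurable fun p : (Fin d → ℝ) × ℝ =>
        (ν {q : (Fin d → ℝ) × ℝ | (p.2, q.2) ∈ s}).toReal * g p.1 :=
      ((hνs.comp measurable_snd).ennreal_toReal).mul (hg.comp measurable_fst)
    exact integral_map hXY.aemeasurable hintmeas.aestronglyMeasurable
  -- Fubini computation for "second coordinate value" integrands, via swap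
  have fub' : ∀ s : Set (ℝ × ℝ), MeasurableSet s →
      Integrable (fun p : ((Fin d → ℝ) × ℝ) × ((Fin d → ℝ) × ℝ) =>
          if (p.2.2, p.1.2) ∈ s then g p.2.1 else 0) (ν.prod ν) ∧
      ∫ p : ((Fin d → ℝ) × ℝ) × ((Fin d → ℝ) × ℝ),
          (if (p.2.2, p.1.2) ∈ s then g p.2.1 else 0) ∂(ν.prod ν)
        = ∫ ω, (ν {q : (Fin d → ℝ) × ℝ | (Y ω, q.2) ∈ s}).toReal * g (X ω) ∂μ := by
    intro s hs
    obtain ⟨hint, heq⟩ := fub s hs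
    have hcond : Measurable fun p : ((Fin d → ℝ) × ℝ) × ((Fin d → ℝ) × ℝ) =>
        (p.2.2, p.1.2) :=
      (measurable_snd.comp measurable_snd).prodMk (measurable_snd.comp measurable_fst)
    have hmeas2 : Measurable fun p : ((Fin d → ℝ) × ℝ) × ((Fin d → ℝ) × ℝ) =>
        if (p.2.2, p.1.2) ∈ s then g p.2.1 else 0 :=
      Measurable.ite (hcond hs) (hg.comp (measurable_fst.comp measurable_snd))
        measurable_const
    have hint2 : Integrable (fun p : ((Fin d → ℝ) × ℝ) × ((Fin d → ℝ) × ℝ) =>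
        if (p.2.2, p.1.2) ∈ s then g p.2.1 else 0) (ν.prod ν) :=
      int_of_bdd hmeas2 (C := M)
        (fun p => by by_cases hp : (p.2.2, p.1.2) ∈ s <;> simp [hp, hgb, hM0])
    refine ⟨hint2, ?_⟩
    have hmeas1 : Measurable fun p : ((Fin d → ℝ) × ℝ) × ((Fin d → ℝ) × ℝ) =>
        if (p.1.2, p.2.2) ∈ s then g p.1.1 else 0 := by
      refine Measurable.ite ?_ (hg.comp (measurable_fst.comp measurable_fst))
        measurable_const
      exact ((measurable_snd.comp measurable_fst).prodMk
        (measurable_snd.comp measurable_snd)) hs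
    have hswap := swap_eq _ hmeas1
    rw [← heq]
    rw [hswap]
    rfl
  -- measurable sets in ℝ × ℝ
  have hs₁ : MeasurableSet {r : ℝ × ℝ | r.2 ≤ r.1} :=
    measurableSet_le measurable_snd measurable_fst
  have hs₂ : MeasurableSet {r : ℝ × ℝ | r.2 < r.1} :=
    measurableSet_lt measurable_snd measurable_fst
  have hs₃ : MeasurableSet {r : ℝ × ℝ | r.1 ≤ r.2} :=
    measurableSet_le measurable_fst measurable_snd
  have hs₄ : MeasurableSet {r : ℝ × ℝ | r.1 < r.2} :=
    measurableSet_lt measurable_fst measurable_snd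
  -- pointwise identifications of the slice measures
  have hw₁ : ∀ ω, (ν {q : (Fin d → ℝ) × ℝ | (Y ω, q.2) ∈ {r : ℝ × ℝ | r.2 ≤ r.1}}).toReal
      = (μ {ω' | Y ω' ≤ Y ω}).toReal := by
    intro ω
    rw [show {q : (Fin d → ℝ) × ℝ | (Y ω, q.2) ∈ {r : ℝ × ℝ | r.2 ≤ r.1}}
        = {q : (Fin d → ℝ) × ℝ | q.2 ≤ Y ω} from rfl, hνle]
  have hw₂ : ∀ ω, (ν {q : (Fin d → ℝ) × ℝ | (Y ω, q.2) ∈ {r : ℝ × ℝ | r.2 < r.1}}).toReal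
      = (μ {ω' | Y ω' ≤ Y ω}).toReal := by
    intro ω
    rw [show {q : (Fin d → ℝ) × ℝ | (Y ω, q.2) ∈ {r : ℝ × ℝ | r.2 < r.1}}
        = {q : (Fin d → ℝ) × ℝ | q.2 < Y ω} from rfl, hνlt]
  have hw₃ : ∀ ω, (ν {q : (Fin d → ℝ) × ℝ | (Y ω, q.2) ∈ {r : ℝ × ℝ | r.1 ≤ r.2}}).toReal
      = 1 - (μ {ω' | Y ω' ≤ Y ω}).toReal := by
    intro ω
    rw [show {q : (Fin d → ℝ) × ℝ | (Y ω, q.2) ∈ {r : ℝ × ℝ | r.1 ≤ r.2}}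
        = {q : (Fin d → ℝ) × ℝ | Y ω ≤ q.2} from rfl, hνge]
  have hw₄ : ∀ ω, (ν {q : (Fin d → ℝ) × ℝ | (Y ω, q.2) ∈ {r : ℝ × ℝ | r.1 < r.2}}).toReal
      = 1 - (μ {ω' | Y ω' ≤ Y ω}).toReal := by
    intro ω
    rw [show {q : (Fin d → ℝ) × ℝ | (Y ω, q.2) ∈ {r : ℝ × ℝ | r.1 < r.2}}
        = {q : (Fin d → ℝ) × ℝ | Y ω < q.2} from rfl, hνgt]
  constructor
  · -- X⁺ case
    have hfm : Measurable fun p : ((Fin d → ℝ) × ℝ) × ((Fin d → ℝ) × ℝ) =>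
        g (if p.2.2 ≤ p.1.2 then p.1.1 else p.2.1) :=
      hg.comp (Measurable.ite (measurableSet_le (measurable_snd.comp measurable_snd)
        (measurable_snd.comp measurable_fst)) (measurable_fst.comp measurable_fst)
        (measurable_fst.comp measurable_snd))
    have h0 : ∫ ω, g (if Y' ω ≤ Y ω then X ω else X' ω) ∂μ
        = ∫ p : ((Fin d → ℝ) × ℝ) × ((Fin d → ℝ) × ℝ),
            g (if p.2.2 ≤ p.1.2 then p.1.1 else p.2.1) ∂(ν.prod ν) := transfer _ hfm
    obtain ⟨hi₁, he₁⟩ := fub {r : ℝ × ℝ | r.2 ≤ r.1} hs₁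
    obtain ⟨hi₂, he₂⟩ := fub' {r : ℝ × ℝ | r.2 < r.1} hs₂
    have hsum : ∫ p : ((Fin d → ℝ) × ℝ) × ((Fin d → ℝ) × ℝ),
        g (if p.2.2 ≤ p.1.2 then p.1.1 else p.2.1) ∂(ν.prod ν)
        = (∫ p : ((Fin d → ℝ) × ℝ) × ((Fin d → ℝ) × ℝ),
            (if (p.1.2, p.2.2) ∈ {r : ℝ × ℝ | r.2 ≤ r.1} then g p.1.1 else 0) ∂(ν.prod ν))
          + ∫ p : ((Fin d → ℝ) × ℝ) × ((Fin d → ℝ) × ℝ),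
            (if (p.2.2, p.1.2) ∈ {r : ℝ × ℝ | r.2 < r.1} then g p.2.1 else 0) ∂(ν.prod ν) := by
      rw [← integral_add hi₁ hi₂]
      refine integral_congr_ae (Filter.Eventually.of_forall fun p => ?_)
      by_cases hp : p.2.2 ≤ p.1.2
      · simp [Set.mem_setOf_eq, hp, not_lt.mpr hp]
      · simp [Set.mem_setOf_eq, hp, lt_of_not_ge hp]
    rw [h0, hsum, he₁, he₂]
    have c₁ : ∫ ω, (ν {q : (Fin d → ℝ) × ℝ |
          (Y ω, q.2) ∈ {r : ℝ × ℝ | r.2 ≤ r.1}}).toReal * g (X ω) ∂μ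
        = ∫ ω, (μ {ω' | Y ω' ≤ Y ω}).toReal * g (X ω) ∂μ :=
      integral_congr_ae (Filter.Eventually.of_forall fun ω => by simp only [hw₁])
    have c₂ : ∫ ω, (ν {q : (Fin d → ℝ) × ℝ |
          (Y ω, q.2) ∈ {r : ℝ × ℝ | r.2 < r.1}}).toReal * g (X ω) ∂μ
        = ∫ ω, (μ {ω' | Y ω' ≤ Y ω}).toReal * g (X ω) ∂μ :=
      integral_congr_ae (Filter.Eventually.of_forall fun ω => by simp only [hw₂])
    rw [c₁, c₂]
    ring
  · -- X⁻ case
    have hfm : Measurable fun p : ((Fin d → ℝ) × ℝ) × ((Fin d → ℝ) × ℝ) =>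
        g (if p.2.2 ≤ p.1.2 then p.2.1 else p.1.1) :=
      hg.comp (Measurable.ite (measurableSet_le (measurable_snd.comp measurable_snd)
        (measurable_snd.comp measurable_fst)) (measurable_fst.comp measurable_snd)
        (measurable_fst.comp measurable_fst))
    have h0 : ∫ ω, g (if Y' ω ≤ Y ω then X' ω else X ω) ∂μ
        = ∫ p : ((Fin d → ℝ) × ℝ) × ((Fin d → ℝ) × ℝ),
            g (if p.2.2 ≤ p.1.2 then p.2.1 else p.1.1) ∂(ν.prod ν) := transfer _ hfm
    obtain ⟨hi₁, he₁⟩ := fub' {r : ℝ × ℝ | r.1 ≤ r.2} hs₃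
    obtain ⟨hi₂, he₂⟩ := fub {r : ℝ × ℝ | r.1 < r.2} hs₄
    have hsum : ∫ p : ((Fin d → ℝ) × ℝ) × ((Fin d → ℝ) × ℝ),
        g (if p.2.2 ≤ p.1.2 then p.2.1 else p.1.1) ∂(ν.prod ν)
        = (∫ p : ((Fin d → ℝ) × ℝ) × ((Fin d → ℝ) × ℝ),
            (if (p.2.2, p.1.2) ∈ {r : ℝ × ℝ | r.1 ≤ r.2} then g p.2.1 else 0) ∂(ν.prod ν))
          + ∫ p : ((Fin d → ℝ) × ℝ) × ((Fin d → ℝ) × ℝ),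
            (if (p.1.2, p.2.2) ∈ {r : ℝ × ℝ | r.1 < r.2} then g p.1.1 else 0) ∂(ν.prod ν) := by
      rw [← integral_add hi₁ hi₂]
      refine integral_congr_ae (Filter.Eventually.of_forall fun p => ?_)
      by_cases hp : p.2.2 ≤ p.1.2
      · simp [Set.mem_setOf_eq, hp, not_lt.mpr hp]
      · simp [Set.mem_setOf_eq, hp, lt_of_not_ge hp]
    rw [h0, hsum, he₁, he₂]
    have c₁ : ∫ ω, (ν {q : (Fin d → ℝ) × ℝ |
          (Y ω, q.2) ∈ {r : ℝ × ℝ | r.1 ≤ r.2}}).toReal * g (X ω) ∂μ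
        = ∫ ω, (1 - (μ {ω' | Y ω' ≤ Y ω}).toReal) * g (X ω) ∂μ :=
      integral_congr_ae (Filter.Eventually.of_forall fun ω => by simp only [hw₃])
    have c₂ : ∫ ω, (ν {q : (Fin d → ℝ) × ℝ |
          (Y ω, q.2) ∈ {r : ℝ × ℝ | r.1 < r.2}}).toReal * g (X ω) ∂μ
        = ∫ ω, (1 - (μ {ω' | Y ω' ≤ Y ω}).toReal) * g (X ω) ∂μ :=
      integral_congr_ae (Filter.Eventually.of_forall fun ω => by simp only [hw₄])
    rw [c₁, c₂]
    ring

/-- (i) For measurable `g` bounded by `M` and any weights `w₁, w₂`,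
`|E[Y g(X)] - w₁ E[g(X⁺)] - w₂ E[g(X⁻)]| ≤ M · Err(w₁, w₂)`, and (ii) consequently for
every measurable `h` with `|φ'(h(x))| ≤ M` and every `λ`,
`|R(h) - R_linear(h; λ, w₁, w₂)| ≤ M · Err(w₁, w₂)`, where
`Err(w₁,w₂) = E[|Y - 2w₁ F_Y(Y) - 2w₂ (1 - F_Y(Y))|]`. -/
theorem stmt_6
    {Ω : Type*} [MeasurableSpace Ω] {μ : Measure Ω} [IsProbabilityMeasure μ]
    {d : ℕ} {X X' : Ω → (Fin d → ℝ)} {Y Y' : Ω → ℝ}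
    (hX : Measurable X) (hY : Measurable Y) (hX' : Measurable X') (hY' : Measurable Y')
    (hindep : IndepFun (fun ω => (X ω, Y ω)) (fun ω => (X' ω, Y' ω)) μ)
    (hident : μ.map (fun ω => (X ω, Y ω)) = μ.map (fun ω => (X' ω, Y' ω)))
    (hatomless : ∀ t : ℝ, μ {ω | Y ω = t} = 0)
    (hYint : Integrable Y μ)
    (φ : ℝ → ℝ) (hφdiff : Differentiable ℝ φ) (hφconv : ConvexOn ℝ Set.univ φ)
    (w1 w2 M : ℝ) :
    (∀ g : (Fin d → ℝ) → ℝ, Measurable g → (∀ x, |g x| ≤ M) →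
      |(∫ ω, Y ω * g (X ω) ∂μ)
          - w1 * (∫ ω, g (if Y' ω ≤ Y ω then X ω else X' ω) ∂μ)
          - w2 * ∫ ω, g (if Y' ω ≤ Y ω then X' ω else X ω) ∂μ|
        ≤ M * ∫ ω, |Y ω - 2 * w1 * (μ {ω' | Y ω' ≤ Y ω}).toReal
            - 2 * w2 * (1 - (μ {ω' | Y ω' ≤ Y ω}).toReal)| ∂μ) ∧
    (∀ h : (Fin d → ℝ) → ℝ, Measurable h → (∀ x, |deriv φ (h x)| ≤ M) →
      Integrable (fun ω => φ (Y ω)) μ →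
      Integrable (fun ω => φ (h (X ω))) μ →
      Integrable (fun ω => h (X ω) * deriv φ (h (X ω))) μ →
      ∀ lam : ℝ,
      |(∫ ω, (φ (Y ω) - φ (h (X ω)) - (Y ω - h (X ω)) * deriv φ (h (X ω))) ∂μ)
          - ((∫ ω, φ (Y ω) ∂μ)
              - (∫ ω, (φ (h (X ω)) - (h (X ω) - lam) * deriv φ (h (X ω))) ∂μ)
              - (w1 - lam / 2) * (∫ ω, deriv φ (h (if Y' ω ≤ Y ω then X ω else X' ω)) ∂μ)
              - (w2 - lam / 2) * ∫ ω, deriv φ (h (if Y' ω ≤ Y ω then X' ω else X ω)) ∂μ)|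
        ≤ M * ∫ ω, |Y ω - 2 * w1 * (μ {ω' | Y ω' ≤ Y ω}).toReal
            - 2 * w2 * (1 - (μ {ω' | Y ω' ≤ Y ω}).toReal)| ∂μ) := by
  classical
  -- notation and basic facts about the CDF composed with Y
  have hFmeas : Measurable (fun ω => (μ {ω' | Y ω' ≤ Y ω}).toReal) := by
    have hmono : Measurable fun t : ℝ => (μ {ω' | Y ω' ≤ t}).toReal :=
      Monotone.measurable (fun a b hab => ENNReal.toReal_mono (measure_ne_top μ _)
        (measure_mono fun ω hω => le_trans hω hab))
    exact hmono.comp hY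
  have hF0 : ∀ ω, 0 ≤ (μ {ω' | Y ω' ≤ Y ω}).toReal := fun ω => ENNReal.toReal_nonneg
  have hF1 : ∀ ω, (μ {ω' | Y ω' ≤ Y ω}).toReal ≤ 1 := by
    intro ω
    have := ENNReal.toReal_mono (ENNReal.one_ne_top) (prob_le_one (μ := μ)
      (s := {ω' | Y ω' ≤ Y ω}))
    simpa using this
  have hFabs : ∀ ω, |(μ {ω' | Y ω' ≤ Y ω}).toReal| ≤ 1 := fun ω => by
    rw [abs_of_nonneg (hF0 ω)]; exact hF1 ω
  have h1Fabs : ∀ ω, |1 - (μ {ω' | Y ω' ≤ Y ω}).toReal| ≤ 1 := fun ω => by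
    rw [abs_of_nonneg (by linarith [hF1 ω])]
    linarith [hF0 ω]
  -- Part (i)
  have part1 : ∀ g : (Fin d → ℝ) → ℝ, Measurable g → (∀ x, |g x| ≤ M) →
      |(∫ ω, Y ω * g (X ω) ∂μ)
          - w1 * (∫ ω, g (if Y' ω ≤ Y ω then X ω else X' ω) ∂μ)
          - w2 * ∫ ω, g (if Y' ω ≤ Y ω then X' ω else X ω) ∂μ|
        ≤ M * ∫ ω, |Y ω - 2 * w1 * (μ {ω' | Y ω' ≤ Y ω}).toReal
            - 2 * w2 * (1 - (μ {ω' | Y ω' ≤ Y ω}).toReal)| ∂μ := by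
    intro g hg hgb
    have hM0 : 0 ≤ M := le_trans (abs_nonneg _) (hgb 0)
    obtain ⟨h1, h2⟩ := keyA hX hY hX' hY' hindep hident hatomless g hg hgb
    have igX : Measurable fun ω => g (X ω) := hg.comp hX
    -- integrability facts
    have iYg : Integrable (fun ω => Y ω * g (X ω)) μ := by
      have := hYint.bdd_mul (f := fun ω => g (X ω)) (c := M)
        igX.aestronglyMeasurable
        (Filter.Eventually.of_forall fun ω => by
          simpa [Real.norm_eq_abs] using hgb (X ω))
      exact this.congr (Filter.Eventually.of_forall fun ω => mul_comm _ _)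
    have iFg : Integrable (fun ω => (μ {ω' | Y ω' ≤ Y ω}).toReal * g (X ω)) μ := by
      refine int_of_bdd (hFmeas.mul igX) (C := M) fun ω => ?_
      rw [abs_mul]
      calc |(μ {ω' | Y ω' ≤ Y ω}).toReal| * |g (X ω)| ≤ 1 * M :=
            mul_le_mul (hFabs ω) (hgb _) (abs_nonneg _) zero_le_one
        _ = M := one_mul M
    have i1Fg : Integrable (fun ω => (1 - (μ {ω' | Y ω' ≤ Y ω}).toReal) * g (X ω)) μ := by
      refine int_of_bdd ((measurable_const.sub hFmeas).mul igX) (C := M) fun ω => ?_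
      rw [abs_mul]
      calc |1 - (μ {ω' | Y ω' ≤ Y ω}).toReal| * |g (X ω)| ≤ 1 * M :=
            mul_le_mul (h1Fabs ω) (hgb _) (abs_nonneg _) zero_le_one
        _ = M := one_mul M
    have e1 : w1 * (∫ ω, g (if Y' ω ≤ Y ω then X ω else X' ω) ∂μ)
        = ∫ ω, 2 * w1 * ((μ {ω' | Y ω' ≤ Y ω}).toReal * g (X ω)) ∂μ := by
      rw [h1, integral_const_mul]; ring
    have e2 : w2 * (∫ ω, g (if Y' ω ≤ Y ω then X' ω else X ω) ∂μ)
        = ∫ ω, 2 * w2 * ((1 - (μ {ω' | Y ω' ≤ Y ω}).toReal) * g (X ω)) ∂μ := by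
      rw [h2, integral_const_mul]; ring
    have key0 : ∫ ω, (Y ω * g (X ω)
          - 2 * w1 * ((μ {ω' | Y ω' ≤ Y ω}).toReal * g (X ω))
          - 2 * w2 * ((1 - (μ {ω' | Y ω' ≤ Y ω}).toReal) * g (X ω))) ∂μ
        = (∫ ω, Y ω * g (X ω) ∂μ)
          - (∫ ω, 2 * w1 * ((μ {ω' | Y ω' ≤ Y ω}).toReal * g (X ω)) ∂μ)
          - ∫ ω, 2 * w2 * ((1 - (μ {ω' | Y ω' ≤ Y ω}).toReal) * g (X ω)) ∂μ := by
      have ia : Integrable (fun ω => Y ω * g (X ω)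
          - 2 * w1 * ((μ {ω' | Y ω' ≤ Y ω}).toReal * g (X ω))) μ :=
        iYg.sub (iFg.const_mul (2 * w1))
      rw [integral_sub ia (i1Fg.const_mul (2 * w2)),
        integral_sub iYg (iFg.const_mul (2 * w1))]
    have key1 : ∫ ω, (Y ω * g (X ω)
          - 2 * w1 * ((μ {ω' | Y ω' ≤ Y ω}).toReal * g (X ω))
          - 2 * w2 * ((1 - (μ {ω' | Y ω' ≤ Y ω}).toReal) * g (X ω))) ∂μ
        = ∫ ω, (Y ω - 2 * w1 * (μ {ω' | Y ω' ≤ Y ω}).toReal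
            - 2 * w2 * (1 - (μ {ω' | Y ω' ≤ Y ω}).toReal)) * g (X ω) ∂μ :=
      integral_congr_ae (Filter.Eventually.of_forall fun ω => by ring)
    rw [e1, e2, ← key0, key1]
    have iu : Integrable (fun ω => Y ω - 2 * w1 * (μ {ω' | Y ω' ≤ Y ω}).toReal
        - 2 * w2 * (1 - (μ {ω' | Y ω' ≤ Y ω}).toReal)) μ := by
      refine Integrable.sub (Integrable.sub hYint ?_) ?_
      · exact (int_of_bdd hFmeas hFabs).const_mul (2 * w1)
      · exact (int_of_bdd (measurable_const.sub hFmeas) h1Fabs).const_mul (2 * w2)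
    have iug : Integrable (fun ω => (Y ω - 2 * w1 * (μ {ω' | Y ω' ≤ Y ω}).toReal
        - 2 * w2 * (1 - (μ {ω' | Y ω' ≤ Y ω}).toReal)) * g (X ω)) μ := by
      have := iu.bdd_mul (f := fun ω => g (X ω)) (c := M)
        igX.aestronglyMeasurable
        (Filter.Eventually.of_forall fun ω => by
          simpa [Real.norm_eq_abs] using hgb (X ω))
      exact this.congr (Filter.Eventually.of_forall fun ω => mul_comm _ _)
    calc |∫ ω, (Y ω - 2 * w1 * (μ {ω' | Y ω' ≤ Y ω}).toReal
            - 2 * w2 * (1 - (μ {ω' | Y ω' ≤ Y ω}).toReal)) * g (X ω) ∂μ|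
        ≤ ∫ ω, |(Y ω - 2 * w1 * (μ {ω' | Y ω' ≤ Y ω}).toReal
            - 2 * w2 * (1 - (μ {ω' | Y ω' ≤ Y ω}).toReal)) * g (X ω)| ∂μ := by
          simpa only [Real.norm_eq_abs] using norm_integral_le_integral_norm
            (fun ω => (Y ω - 2 * w1 * (μ {ω' | Y ω' ≤ Y ω}).toReal
              - 2 * w2 * (1 - (μ {ω' | Y ω' ≤ Y ω}).toReal)) * g (X ω)) (μ := μ)
      _ ≤ ∫ ω, |Y ω - 2 * w1 * (μ {ω' | Y ω' ≤ Y ω}).toReal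
            - 2 * w2 * (1 - (μ {ω' | Y ω' ≤ Y ω}).toReal)| * M ∂μ := by
          refine integral_mono iug.abs (iu.abs.mul_const M) fun ω => ?_
          rw [abs_mul]
          exact mul_le_mul_of_nonneg_left (hgb _) (abs_nonneg _)
      _ = M * ∫ ω, |Y ω - 2 * w1 * (μ {ω' | Y ω' ≤ Y ω}).toReal
            - 2 * w2 * (1 - (μ {ω' | Y ω' ≤ Y ω}).toReal)| ∂μ := by
          rw [integral_mul_const]; ring
  refine ⟨part1, ?_⟩
  -- Part (ii)
  intro h hh hb hYφ hhφ ihd lam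
  set dφ : (Fin d → ℝ) → ℝ := fun x => deriv φ (h x) with hdφ
  have hdmeas : Measurable dφ := (measurable_deriv φ).comp hh
  have hM0 : 0 ≤ M := le_trans (abs_nonneg _) (hb 0)
  obtain ⟨k1, k2⟩ := keyA hX hY hX' hY' hindep hident hatomless dφ hdmeas hb
  have igX : Measurable fun ω => dφ (X ω) := hdmeas.comp hX
  have idX : Integrable (fun ω => dφ (X ω)) μ :=
    int_of_bdd igX (C := M) fun ω => hb (X ω)
  have ihd' : Integrable (fun ω => h (X ω) * dφ (X ω)) μ :=
    ihd.congr (Filter.Eventually.of_forall fun ω => by simp [hdφ])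
  have iYd : Integrable (fun ω => Y ω * dφ (X ω)) μ := by
    have := hYint.bdd_mul (f := fun ω => dφ (X ω)) (c := M)
      igX.aestronglyMeasurable
      (Filter.Eventually.of_forall fun ω => by
        simpa [Real.norm_eq_abs] using hb (X ω))
    exact this.congr (Filter.Eventually.of_forall fun ω => mul_comm _ _)
  -- decompose the Bregman risk integral
  have eq1 : ∫ ω, (φ (Y ω) - φ (h (X ω)) - (Y ω - h (X ω)) * deriv φ (h (X ω))) ∂μ
      = (∫ ω, φ (Y ω) ∂μ) - (∫ ω, φ (h (X ω)) ∂μ)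
        - ((∫ ω, Y ω * dφ (X ω) ∂μ) - ∫ ω, h (X ω) * dφ (X ω) ∂μ) := by
    have e0 : ∫ ω, (φ (Y ω) - φ (h (X ω)) - (Y ω - h (X ω)) * deriv φ (h (X ω))) ∂μ
        = ∫ ω, ((φ (Y ω) - φ (h (X ω))) - (Y ω * dφ (X ω) - h (X ω) * dφ (X ω))) ∂μ :=
      integral_congr_ae (Filter.Eventually.of_forall fun ω => by
        simp only [hdφ]; ring)
    have ia : Integrable (fun ω => φ (Y ω) - φ (h (X ω))) μ := hYφ.sub hhφ
    have ib : Integrable (fun ω => Y ω * dφ (X ω) - h (X ω) * dφ (X ω)) μ :=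
      iYd.sub ihd'
    rw [e0, integral_sub ia ib, integral_sub hYφ hhφ, integral_sub iYd ihd']
  have eq2 : ∫ ω, (φ (h (X ω)) - (h (X ω) - lam) * deriv φ (h (X ω))) ∂μ
      = (∫ ω, φ (h (X ω)) ∂μ)
        - ((∫ ω, h (X ω) * dφ (X ω) ∂μ) - lam * ∫ ω, dφ (X ω) ∂μ) := by
    have e0 : ∫ ω, (φ (h (X ω)) - (h (X ω) - lam) * deriv φ (h (X ω))) ∂μ
        = ∫ ω, (φ (h (X ω)) - (h (X ω) * dφ (X ω) - lam * dφ (X ω))) ∂μ :=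
      integral_congr_ae (Filter.Eventually.of_forall fun ω => by
        simp only [hdφ]; ring)
    have ib : Integrable (fun ω => h (X ω) * dφ (X ω) - lam * dφ (X ω)) μ :=
      ihd'.sub (idX.const_mul lam)
    rw [e0, integral_sub hhφ ib, integral_sub ihd' (idX.const_mul lam),
      integral_const_mul]
  -- sum of the two comparison expectations
  have iFd : Integrable (fun ω => (μ {ω' | Y ω' ≤ Y ω}).toReal * dφ (X ω)) μ := by
    refine int_of_bdd (hFmeas.mul igX) (C := M) fun ω => ?_
    rw [abs_mul]
    calc |(μ {ω' | Y ω' ≤ Y ω}).toReal| * |dφ (X ω)| ≤ 1 * M :=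
          mul_le_mul (hFabs ω) (hb _) (abs_nonneg _) zero_le_one
      _ = M := one_mul M
  have i1Fd : Integrable (fun ω => (1 - (μ {ω' | Y ω' ≤ Y ω}).toReal) * dφ (X ω)) μ := by
    refine int_of_bdd ((measurable_const.sub hFmeas).mul igX) (C := M) fun ω => ?_
    rw [abs_mul]
    calc |1 - (μ {ω' | Y ω' ≤ Y ω}).toReal| * |dφ (X ω)| ≤ 1 * M :=
          mul_le_mul (h1Fabs ω) (hb _) (abs_nonneg _) zero_le_one
      _ = M := one_mul M
  have eq3 : (∫ ω, dφ (if Y' ω ≤ Y ω then X ω else X' ω) ∂μ)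
      + (∫ ω, dφ (if Y' ω ≤ Y ω then X' ω else X ω) ∂μ)
      = 2 * ∫ ω, dφ (X ω) ∂μ := by
    rw [k1, k2, ← mul_add, ← integral_add iFd i1Fd]
    have : ∫ ω, ((μ {ω' | Y ω' ≤ Y ω}).toReal * dφ (X ω)
        + (1 - (μ {ω' | Y ω' ≤ Y ω}).toReal) * dφ (X ω)) ∂μ = ∫ ω, dφ (X ω) ∂μ :=
      integral_congr_ae (Filter.Eventually.of_forall fun ω => by ring)
    rw [this]
  -- apply part (i) with g = deriv φ ∘ h
  have happ := part1 dφ hdmeas hb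
  have hrewrite : (∫ ω, (φ (Y ω) - φ (h (X ω)) - (Y ω - h (X ω)) * deriv φ (h (X ω))) ∂μ)
          - ((∫ ω, φ (Y ω) ∂μ)
              - (∫ ω, (φ (h (X ω)) - (h (X ω) - lam) * deriv φ (h (X ω))) ∂μ)
              - (w1 - lam / 2) * (∫ ω, deriv φ (h (if Y' ω ≤ Y ω then X ω else X' ω)) ∂μ)
              - (w2 - lam / 2) * ∫ ω, deriv φ (h (if Y' ω ≤ Y ω then X' ω else X ω)) ∂μ)
      = -((∫ ω, Y ω * dφ (X ω) ∂μ)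
          - w1 * (∫ ω, dφ (if Y' ω ≤ Y ω then X ω else X' ω) ∂μ)
          - w2 * ∫ ω, dφ (if Y' ω ≤ Y ω then X' ω else X ω) ∂μ) := by
    have hA : (∫ ω, deriv φ (h (if Y' ω ≤ Y ω then X ω else X' ω)) ∂μ)
        = ∫ ω, dφ (if Y' ω ≤ Y ω then X ω else X' ω) ∂μ := rfl
    have hB : (∫ ω, deriv φ (h (if Y' ω ≤ Y ω then X' ω else X ω)) ∂μ)
        = ∫ ω, dφ (if Y' ω ≤ Y ω then X' ω else X ω) ∂μ := rfl
    rw [eq1, eq2, hA, hB]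
    linear_combination (-(lam/2)) * eq3
  calc |(∫ ω, (φ (Y ω) - φ (h (X ω)) - (Y ω - h (X ω)) * deriv φ (h (X ω))) ∂μ)
          - ((∫ ω, φ (Y ω) ∂μ)
              - (∫ ω, (φ (h (X ω)) - (h (X ω) - lam) * deriv φ (h (X ω))) ∂μ)
              - (w1 - lam / 2) * (∫ ω, deriv φ (h (if Y' ω ≤ Y ω then X ω else X' ω)) ∂μ)
              - (w2 - lam / 2) * ∫ ω, deriv φ (h (if Y' ω ≤ Y ω then X' ω else X ω)) ∂μ)|
      = |(∫ ω, Y ω * dφ (X ω) ∂μ)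
          - w1 * (∫ ω, dφ (if Y' ω ≤ Y ω then X ω else X' ω) ∂μ)
          - w2 * ∫ ω, dφ (if Y' ω ≤ Y ω then X' ω else X ω) ∂μ| := by
        rw [hrewrite, abs_neg]
    _ ≤ M * ∫ ω, |Y ω - 2 * w1 * (μ {ω' | Y ω' ≤ Y ω}).toReal
            - 2 * w2 * (1 - (μ {ω' | Y ω' ≤ Y ω}).toReal)| ∂μ := happ
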